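/- If φ is a context formula for c with respect to 𝕊, then for every t ≥ 1 there exists a t-step model q₀ of K = ((μ, T), 𝕊) such that P_{q₀}(c[1:t]) = Σ over paths W : Fin t → (V → Bool) with W i satisfying φ for some i, of π_t(W); in particular, the infimum defining P_K(c[1:t]) is attained. -/

import Mathlib

open scoped ENNReal

namespace DBL

variable {I A C V : Type*}

/-- A world `W` satisfies the context `κ` if it agrees with `κ` wherever it is defined. -/
def SatCtx (W : V → Bool) (κ : V → Option Bool) : Prop :=
  ∀ v b, κ v = some b → W v = b

/-- The ontology induced by the world `W` from the `V`-ontology `𝕊`. -/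
def OW (𝕊 : Finset (A × (V → Option Bool))) (W : V → Bool) : Set A :=
  {α | ∃ κ, (α, κ) ∈ 𝕊 ∧ SatCtx W κ}

/-- `i` is a model of the ontology `O`. -/
def IsOntModel (satA : I → A → Prop) (O : Set A) (i : I) : Prop :=
  ∀ α ∈ O, satA i α

/-- The ontology `O` entails the consequence `c`. -/
def Entails (satA : I → A → Prop) (satC : I → C → Prop) (O : Set A) (c : C) : Prop :=
  ∀ i : I, IsOntModel satA O i → satC i c

/-- The `t`-step path distribution of the Markov chain with initial distribution `μ` and
transition kernel `T`: `π_t(W) = μ(W 0) · ∏_{i < t-1} T(W i)(W (i+1))`. -/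
noncomputable def pathProb {S : Type*} (μ : PMF S) (T : S → PMF S)
    (t : ℕ) (W : Fin t → S) : ℝ≥0∞ :=
  if h : 0 < t then
    μ (W ⟨0, h⟩) * ∏ i : Fin (t - 1),
      T (W ⟨(i : ℕ), by have := i.2; omega⟩) (W ⟨(i : ℕ) + 1, by have := i.2; omega⟩)
  else 1

/-- A `t`-step probabilistic interpretation `q` (a finitely supported PMF on pairs of a
tuple of interpretations and a path of worlds) is a `t`-step model of `((μ, T), 𝕊)`. -/
def IsStepModel (satA : I → A → Prop) (μ : PMF (V → Bool))
    (T : (V → Bool) → PMF (V → Bool)) (𝕊 : Finset (A × (V → Option Bool))) (t : ℕ)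
    (q : PMF ((Fin t → I) × (Fin t → (V → Bool)))) : Prop :=
  q.support.Finite ∧
    (∀ iw ∈ q.support, ∀ s : Fin t, IsOntModel satA (OW 𝕊 (iw.2 s)) (iw.1 s)) ∧
    ∀ W : Fin t → (V → Bool), ∑' i : Fin t → I, q (i, W) = pathProb μ T t W

/-- `P_q(c[1:t])`: the `q`-probability that `c` is observed at some step `s < t`. -/
noncomputable def Pqt (satC : I → C → Prop) (t : ℕ)
    (q : PMF ((Fin t → I) × (Fin t → (V → Bool)))) (c : C) : ℝ≥0∞ :=
  ∑' iw : (Fin t → I) × (Fin t → (V → Bool)),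
    {x : (Fin t → I) × (Fin t → (V → Bool)) | ∃ s : Fin t, satC (x.1 s) c}.indicator (⇑q) iw

/-- `P_K(c[1:t])`: the infimum of `P_q(c[1:t])` over all `t`-step models `q` of the KB. -/
noncomputable def PKbound (satA : I → A → Prop) (satC : I → C → Prop)
    (μ : PMF (V → Bool)) (T : (V → Bool) → PMF (V → Bool))
    (𝕊 : Finset (A × (V → Option Bool))) (c : C) (t : ℕ) : ℝ≥0∞ :=
  sInf {x : ℝ≥0∞ | ∃ q : PMF ((Fin t → I) × (Fin t → (V → Bool))),
    IsStepModel satA μ T 𝕊 t q ∧ x = Pqt satC t q c}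

section PathSum

variable {S : Type*} [Fintype S]

lemma pathProb_cons (μ : PMF S) (T : S → PMF S) (n : ℕ) (s : S) (W : Fin (n + 1) → S) :
    pathProb μ T (n + 2) (Fin.cons s W)
      = μ s * pathProb (T s) T (n + 1) W := by
  simp only [pathProb, dif_pos (Nat.succ_pos _)]
  show μ ((Fin.cons s W : Fin (n + 2) → S) ⟨0, by omega⟩) *
      ∏ i : Fin (n + 1), T ((Fin.cons s W : Fin (n + 2) → S) ⟨(i : ℕ), by omega⟩)
        ((Fin.cons s W : Fin (n + 2) → S) ⟨(i : ℕ) + 1, by omega⟩)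
    = μ s * (T s (W ⟨0, by omega⟩) *
      ∏ i : Fin n, T (W ⟨(i : ℕ), by omega⟩) (W ⟨(i : ℕ) + 1, by omega⟩))
  rw [Fin.prod_univ_succ]
  rfl

lemma sum_pathProb (T : S → PMF S) :
    ∀ (n : ℕ) (μ : PMF S), ∑ W : Fin (n + 1) → S, pathProb μ T (n + 1) W = 1
  | 0, μ => by
    have h1 : ∀ W : Fin 1 → S, pathProb μ T 1 W = μ (W 0) := by
      intro W; simp [pathProb]
    have h2 : ∑ W : Fin 1 → S, pathProb μ T 1 W = ∑ s : S, μ s := by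
      refine Fintype.sum_equiv (Equiv.funUnique (Fin 1) S) _ _ fun W => ?_
      rw [h1]; rfl
    have h3 := μ.tsum_coe
    rw [tsum_fintype] at h3
    rw [h2, h3]
  | (n + 1), μ => by
    have he : ∑ W : Fin (n + 2) → S, pathProb μ T (n + 2) W
        = ∑ p : S × (Fin (n + 1) → S), pathProb μ T (n + 2) (Fin.cons p.1 p.2) := by
      refine (Fintype.sum_equiv (Fin.consEquiv fun _ => S) _ _ fun p => ?_).symm
      rfl
    rw [he]
    rw [Fintype.sum_prod_type]
    have h3 := μ.tsum_coe
    rw [tsum_fintype] at h3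
    calc ∑ s : S, ∑ W : Fin (n + 1) → S, pathProb μ T (n + 2) (Fin.cons s W)
        = ∑ s : S, μ s * ∑ W : Fin (n + 1) → S, pathProb (T s) T (n + 1) W := by
          refine Finset.sum_congr rfl fun s _ => ?_
          rw [Finset.mul_sum]
          exact Finset.sum_congr rfl fun W _ => pathProb_cons μ T n s W
      _ = ∑ s : S, μ s := by
          refine Finset.sum_congr rfl fun s _ => ?_
          rw [sum_pathProb T n (T s), mul_one]
      _ = 1 := h3

lemma hasSum_pathProb (μ : PMF S) (T : S → PMF S) (t : ℕ) (ht : 1 ≤ t) :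
    HasSum (pathProb μ T t) 1 := by
  obtain ⟨n, rfl⟩ : ∃ n, t = n + 1 := ⟨t - 1, by omega⟩
  have := hasSum_fintype (pathProb μ T (n + 1))
  rwa [sum_pathProb T n μ] at this

end PathSum

/-- if `φ` is a context formula for `c` w.r.t. `𝕊`, then for every `t ≥ 1`
there is a `t`-step model `q₀` of the KB with
`P_{q₀}(c[1:t]) = Σ over paths W hitting φ of π_t(W)`, and `q₀` attains the infimum
defining `P_K(c[1:t])`. -/
theorem time_bounded_entailment_attained [Fintype V]
    (satA : I → A → Prop) (satC : I → C → Prop)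
    (μ : PMF (V → Bool)) (T : (V → Bool) → PMF (V → Bool))
    (𝕊 : Finset (A × (V → Option Bool))) (c : C)
    (φ : (V → Bool) → Prop)
    (hφ : ∀ W : V → Bool, Entails satA satC (OW 𝕊 W) c ↔ φ W)
    (t : ℕ) (ht : 1 ≤ t)
    (hmod : ∀ W : V → Bool, ∃ i : I, IsOntModel satA (OW 𝕊 W) i) :
    ∃ q₀ : PMF ((Fin t → I) × (Fin t → (V → Bool))),
      IsStepModel satA μ T 𝕊 t q₀ ∧
      Pqt satC t q₀ c
        = (∑' W : Fin t → (V → Bool),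
            {W : Fin t → (V → Bool) | ∃ i : Fin t, φ (W i)}.indicator (pathProb μ T t) W) ∧
      ∀ q : PMF ((Fin t → I) × (Fin t → (V → Bool))),
        IsStepModel satA μ T 𝕊 t q → Pqt satC t q₀ c ≤ Pqt satC t q c := by
  classical
  -- choose, for each world, an interpretation witnessing (non-)entailment
  have hchoice : ∀ W : V → Bool, ∃ i : I, IsOntModel satA (OW 𝕊 W) i ∧
      (satC i c ↔ φ W) := by
    intro W
    by_cases h : φ W
    · obtain ⟨i, hi⟩ := hmod W
      exact ⟨i, hi, iff_of_true ((hφ W).2 h i hi) h⟩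
    · have h' : ¬ Entails satA satC (OW 𝕊 W) c := fun he => h ((hφ W).1 he)
      simp only [Entails, not_forall, Classical.not_imp] at h'
      obtain ⟨i, hi, hic⟩ := h'
      exact ⟨i, hi, iff_of_false hic h⟩
  choose f hf1 hf2 using hchoice
  -- the path distribution as a PMF
  set p : PMF (Fin t → (V → Bool)) := ⟨pathProb μ T t, hasSum_pathProb μ T t ht⟩ with hp
  have hpa : ∀ W, p W = pathProb μ T t W := fun W => rfl
  set g : (Fin t → (V → Bool)) → (Fin t → I) × (Fin t → (V → Bool)) :=
    fun W => (fun s => f (W s), W) with hg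
  have hginj : Function.Injective g := fun W W' h => congrArg Prod.snd h
  set q₀ : PMF ((Fin t → I) × (Fin t → (V → Bool))) := p.map g with hq0def
  have hq0 : ∀ (i : Fin t → I) (W : Fin t → (V → Bool)),
      q₀ (i, W) = if i = fun s => f (W s) then pathProb μ T t W else 0 := by
    intro i W
    rw [hq0def, PMF.map_apply]
    rw [tsum_eq_single W]
    · by_cases h : i = fun s => f (W s)
      · subst h
        rw [if_pos rfl, if_pos rfl, hpa]
      · rw [if_neg h, if_neg]
        intro hc
        exact h (congrArg Prod.fst hc)
    · intro W' hW'
      rw [if_neg]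
      intro hc
      exact hW' (congrArg Prod.snd hc).symm
  have hmarg : ∀ W : Fin t → (V → Bool), ∑' i : Fin t → I, q₀ (i, W) = pathProb μ T t W := by
    intro W
    simp only [hq0]
    exact tsum_ite_eq _ _
  have hsupp : q₀.support = g '' p.support := PMF.support_map g p
  have hstep : IsStepModel satA μ T 𝕊 t q₀ := by
    refine ⟨?_, ?_, hmarg⟩
    · rw [hsupp]
      exact (Set.toFinite p.support).image g
    · intro iw hiw s
      rw [hsupp] at hiw
      obtain ⟨W, _, rfl⟩ := hiw
      exact hf1 (W s)
  -- the target value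
  set val : ℝ≥0∞ := ∑' W : Fin t → (V → Bool),
      {W : Fin t → (V → Bool) | ∃ i : Fin t, φ (W i)}.indicator (pathProb μ T t) W with hval
  have hPq0 : Pqt satC t q₀ c = val := by
    rw [Pqt, hval]
    have hvanish : ∀ x, x ∉ Set.range g →
        ({x : (Fin t → I) × (Fin t → (V → Bool)) | ∃ s : Fin t, satC (x.1 s) c}.indicator
          (⇑q₀)) x = 0 := by
      intro x hx
      have hq : q₀ x = 0 := by
        by_contra h
        have : x ∈ q₀.support := h
        rw [hsupp] at this
        obtain ⟨W, _, rfl⟩ := this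
        exact hx ⟨W, rfl⟩
      simp [Set.indicator_apply, hq]
    rw [← hginj.tsum_eq (f := fun x =>
      ({x : (Fin t → I) × (Fin t → (V → Bool)) | ∃ s : Fin t, satC (x.1 s) c}.indicator
        (⇑q₀)) x) (fun x hx => by by_contra hxr; exact hx (hvanish x hxr))]
    refine tsum_congr fun W => ?_
    have hmem : ((g W) ∈ {x : (Fin t → I) × (Fin t → (V → Bool)) | ∃ s : Fin t, satC (x.1 s) c})
        ↔ (W ∈ {W : Fin t → (V → Bool) | ∃ i : Fin t, φ (W i)}) := by
      simp only [Set.mem_setOf_eq, hg]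
      exact exists_congr fun s => hf2 (W s)
    have hq0W : q₀ (g W) = pathProb μ T t W := by
      rw [hg]
      rw [hq0]
      exact if_pos rfl
    by_cases h : W ∈ {W : Fin t → (V → Bool) | ∃ i : Fin t, φ (W i)}
    · rw [Set.indicator_of_mem (hmem.2 h), Set.indicator_of_mem h, hq0W]
    · rw [Set.indicator_of_notMem (fun hc => h (hmem.1 hc)),
        Set.indicator_of_notMem h]
  have hmin : ∀ q : PMF ((Fin t → I) × (Fin t → (V → Bool))),
      IsStepModel satA μ T 𝕊 t q → val ≤ Pqt satC t q c := by
    intro q ⟨hqfin, hqmod, hqmarg⟩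
    rw [Pqt, ENNReal.tsum_prod', ENNReal.tsum_comm]
    rw [hval]
    refine ENNReal.tsum_le_tsum fun W => ?_
    by_cases h : W ∈ {W : Fin t → (V → Bool) | ∃ i : Fin t, φ (W i)}
    · rw [Set.indicator_of_mem h]
      calc pathProb μ T t W = ∑' i : Fin t → I, q (i, W) := (hqmarg W).symm
        _ ≤ _ := by
          refine ENNReal.tsum_le_tsum fun i => ?_
          by_cases hz : q (i, W) = 0
          · rw [hz]; exact zero_le
          · have hmemq : (i, W) ∈ q.support := hz
            obtain ⟨s, hs⟩ := h
            have : satC ((i, W).1 s) c :=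
              (hφ (W s)).2 hs ((i, W).1 s) (hqmod (i, W) hmemq s)
            rw [Set.indicator_of_mem
              (show (i, W) ∈ {x : (Fin t → I) × (Fin t → (V → Bool)) |
                ∃ s : Fin t, satC (x.1 s) c} from ⟨s, this⟩) (⇑q)]
    · rw [Set.indicator_of_notMem h]
      exact zero_le
  exact ⟨q₀, hstep, hPq0, fun q hq => hPq0 ▸ hmin q hq⟩

end DBL
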